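/- On the elliptic curve E_t in Weierstrass form ζ²η = σ(tη² + ((t−3)² − 12)/4 · ση + σ²) with identity O = (0:1:0), the point P₃ = (1 : (t−1)/2 : 1) has order dividing 3, i.e. 3·P₃ = O, for every parameter t for which the curve is smooth. -/

import Mathlib

open WeierstrassCurve

/-- The sunset elliptic curve `ζ²η = σ(tη² + ((t−3)²−12)/4·ση + σ²)` in the affine
chart `η = 1`, i.e. `y² = x³ + ((t−3)²−12)/4·x² + t·x`. -/
noncomputable def sunsetCurve (t : ℝ) : WeierstrassCurve.Affine ℝ :=
  { a₁ := 0, a₂ := ((t - 3) ^ 2 - 12) / 4, a₃ := 0, a₄ := t, a₆ := 0 }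

/-- The point `P₃ = (1, (t−1)/2)` lies on the sunset curve. -/
theorem sunset_P3_equation (t : ℝ) : (sunsetCurve t).Equation 1 ((t - 1) / 2) := by
  simp only [sunsetCurve, WeierstrassCurve.Affine.equation_iff]; ring

theorem sunset_P3_three_torsion (t : ℝ) (hΔ : (sunsetCurve t).Δ ≠ 0) :
    (3 : ℤ) • (WeierstrassCurve.Affine.Point.some _ _
        ((WeierstrassCurve.Affine.equation_iff_nonsingular_of_Δ_ne_zero (W := sunsetCurve t) hΔ).mp
          (sunset_P3_equation t)))
      = (0 : (sunsetCurve t).Point) := by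
  have hΔ' : (sunsetCurve t).Δ = t ^ 2 * (t - 1) ^ 3 * (t - 9) := by
    simp only [sunsetCurve, WeierstrassCurve.Δ, WeierstrassCurve.b₂, WeierstrassCurve.b₄,
      WeierstrassCurve.b₆, WeierstrassCurve.b₈]
    ring
  have ht1 : t - 1 ≠ 0 := by
    intro h
    apply hΔ
    rw [hΔ', h]
    ring
  set W := sunsetCurve t with hW
  set y : ℝ := (t - 1) / 2 with hy0
  have ha₁ : W.a₁ = 0 := rfl
  have ha₂ : W.a₂ = ((t - 3) ^ 2 - 12) / 4 := rfl
  have ha₃ : W.a₃ = 0 := rfl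
  have ha₄ : W.a₄ = t := rfl
  have hy : y ≠ W.negY 1 y := by
    simp only [Affine.negY, ha₁, ha₃, hy0]
    intro h
    apply ht1
    linarith
  set P := WeierstrassCurve.Affine.Point.some _ _
        ((WeierstrassCurve.Affine.equation_iff_nonsingular_of_Δ_ne_zero (W := sunsetCurve t) hΔ).mp
          (sunset_P3_equation t)) with hP
  have hden : y - W.negY 1 y = t - 1 := by
    simp only [Affine.negY, ha₁, ha₃, hy0]
    ring
  have hL : W.slope 1 1 y y = (t - 3) / 2 := by
    rw [Affine.slope_of_Y_ne rfl hy, hden, ha₁, ha₂, ha₄, hy0]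
    field_simp
    ring
  have hx2 : W.addX 1 1 (W.slope 1 1 y y) = 1 := by
    rw [hL, Affine.addX, ha₁, ha₂]
    ring
  have h2 : P + P = WeierstrassCurve.Affine.Point.some _ _
      (Affine.nonsingular_add ((WeierstrassCurve.Affine.equation_iff_nonsingular_of_Δ_ne_zero (W := sunsetCurve t) hΔ).mp
          (sunset_P3_equation t))
        ((WeierstrassCurve.Affine.equation_iff_nonsingular_of_Δ_ne_zero (W := sunsetCurve t) hΔ).mp
          (sunset_P3_equation t)) fun h => hy h.right) := by
    exact Affine.Point.add_self_of_Y_ne hy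
  have hyeq : y = W.negY (W.addX 1 1 (W.slope 1 1 y y)) (W.addY 1 1 y (W.slope 1 1 y y)) := by
    rw [Affine.addY, Affine.negY_negY, Affine.negAddY, hx2]
    ring
  have h3 : P + (P + P) = 0 := by
    rw [h2]
    exact Affine.Point.add_of_Y_eq hx2.symm hyeq
  have : (3 : ℤ) • P = P + (P + P) := by
    rw [show (3 : ℤ) = 1 + (1 + 1) by norm_num, add_zsmul, add_zsmul, one_zsmul]
  rw [this, h3]
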